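/- Under the consensus protocol u = −v − L·x with L symmetric positive semidefinite and ker L = span{𝟏}, every solution of ẋ = v, v̇ = −L·x − v converges: vᵢ(t) → 0 for all i and xᵢ(t) − xⱼ(t) → 0 for all i, j as t → ∞. -/

import Mathlib

open Matrix Filter Topology

section ConsensusAux

open Complex in
/-- first-order linear complex ODE -/
lemma ode1 (r : ℂ) (f : ℝ → ℂ) (hf : ∀ t, HasDerivAt f (r * f t) t) (t : ℝ) :
    f t = f 0 * Complex.exp (r * t) := by
  set g : ℝ → ℂ := fun t => Complex.exp (-r * t) * f t with hg
  have hg' : ∀ s : ℝ, HasDerivAt g 0 s := by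
    intro s
    have h1 : HasDerivAt (fun s : ℝ => Complex.exp (-r * s)) (-r * Complex.exp (-r * s)) s := by
      have := ((hasDerivAt_id s).ofReal_comp.const_mul (-r)).cexp
      simpa [mul_comm] using this
    have := h1.mul (hf s)
    refine this.congr_deriv (Eq.symm ?_)
    ring
  have hgc : ∀ s, g s = g 0 := by
    intro s
    have : Differentiable ℝ g := fun s => (hg' s).differentiableAt
    exact is_const_of_deriv_eq_zero this (fun s => (hg' s).deriv) s 0
  have h := hgc t
  have hne : Complex.exp (-r * t) ≠ 0 := Complex.exp_ne_zero _
  simp [hg] at h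
  rw [← h, mul_comm (Complex.exp (-(r*t))) (f t), mul_assoc, ← Complex.exp_add]
  simp

lemma tendsto_cexp (r : ℂ) (hr : r.re < 0) :
    Tendsto (fun t : ℝ => Complex.exp (r * t)) atTop (𝓝 0) := by
  rw [tendsto_zero_iff_norm_tendsto_zero]
  have : ∀ t : ℝ, ‖Complex.exp (r * t)‖ = Real.exp (r.re * t) := by
    intro t; rw [Complex.norm_exp]; norm_num
  simp_rw [this]
  exact Real.tendsto_exp_atBot.comp ((tendsto_const_mul_atBot_of_neg hr).2 tendsto_id)

lemma tendsto_mul_cexp (r : ℂ) (hr : r.re < 0) :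
    Tendsto (fun t : ℝ => (t : ℂ) * Complex.exp (r * t)) atTop (𝓝 0) := by
  rw [tendsto_zero_iff_norm_tendsto_zero]
  have h0 : Tendsto (fun t : ℝ => t * Real.exp (r.re * t)) atTop (𝓝 0) := by
    have key : Tendsto (fun u : ℝ => (-r.re)⁻¹ * (u ^ 1 * Real.exp (-u))) atTop (𝓝 0) := by
      simpa using (Real.tendsto_pow_mul_exp_neg_atTop_nhds_zero 1).const_mul (-r.re)⁻¹
    have hcomp := key.comp (tendsto_id.const_mul_atTop (by linarith : (0:ℝ) < -r.re))
    have : (fun t : ℝ => (-r.re)⁻¹ * ((-r.re * t) ^ 1 * Real.exp (-(-r.re * t))))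
        = fun t : ℝ => t * Real.exp (r.re * t) := by
      funext t
      have hne : -r.re ≠ 0 := by linarith
      simp only [pow_one]
      rw [show -(-r.re * t) = r.re * t from by ring]
      rw [show -r.re * t * Real.exp (r.re * t) = -r.re * (t * Real.exp (r.re * t)) from by ring,
        ← mul_assoc, inv_mul_cancel₀ hne, one_mul]
    have heq : ((fun u : ℝ => (-r.re)⁻¹ * (u ^ 1 * Real.exp (-u))) ∘ fun x : ℝ => -r.re * id x)
        = fun t : ℝ => (-r.re)⁻¹ * ((-r.re * t) ^ 1 * Real.exp (-(-r.re * t))) := rfl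
    rwa [heq, this] at hcomp
  have hb : ∀ t : ℝ, 0 ≤ t → ‖(t : ℂ) * Complex.exp (r * t)‖ = t * Real.exp (r.re * t) := by
    intro t ht
    rw [norm_mul, Complex.norm_exp, Complex.norm_real, Real.norm_eq_abs,
      _root_.abs_of_nonneg ht]
    norm_num
  have : Tendsto (fun t : ℝ => t * Real.exp (r.re * t)) atTop (𝓝 0) := h0
  apply this.congr'
  filter_upwards [eventually_ge_atTop (0:ℝ)] with t ht
  exact (hb t ht).symm

lemma exp_deriv (r : ℂ) (t : ℝ) :
    HasDerivAt (fun t : ℝ => Complex.exp (r * t)) (r * Complex.exp (r * t)) t := by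
  have := ((hasDerivAt_id t).ofReal_comp.const_mul r).cexp
  simpa [mul_comm] using this

lemma const_of_deriv_zero (g : ℝ → ℂ) (hg : ∀ t, HasDerivAt g 0 t) (t : ℝ) : g t = g 0 :=
  is_const_of_deriv_eq_zero (fun s => (hg s).differentiableAt) (fun s => (hg s).deriv) t 0

lemma ode0 (p : ℝ → ℝ) (hp : ∀ t, HasDerivAt p (-p t) t) :
    Tendsto p atTop (𝓝 0) := by
  have hP : ∀ t, HasDerivAt (fun t => (p t : ℂ)) ((-1) * (p t : ℂ)) t := by
    intro t
    have := (hp t).ofReal_comp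
    push_cast at this
    simpa using this
  have hform := ode1 (-1) (fun t => (p t : ℂ)) hP
  have hT : Tendsto (fun t => (p t : ℂ)) atTop (𝓝 0) := by
    have := (tendsto_cexp (-1) (by norm_num)).const_mul ((p 0 : ℂ))
    simp only [mul_zero] at this
    exact this.congr fun t => (hform t).symm
  have := (Complex.continuous_re.tendsto 0).comp hT
  simpa [Function.comp_def] using this

lemma inv_exp_eq (r a b : ℂ) (t : ℝ) (h : Complex.exp (-r * t) * a = b) :
    a = b * Complex.exp (r * t) := by
  have h2 := congrArg (fun w => Complex.exp (r * t) * w) h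
  simp only [← mul_assoc, ← Complex.exp_add] at h2
  have h3 : r * (t:ℂ) + -r * t = 0 := by ring
  rw [h3, Complex.exp_zero, one_mul] at h2
  rw [h2, mul_comm]

lemma ode2 (μ : ℝ) (hμ : 0 < μ) (y p : ℝ → ℝ)
    (hy : ∀ t, HasDerivAt y (p t) t)
    (hp : ∀ t, HasDerivAt p (-p t - μ * y t) t) :
    Tendsto y atTop (𝓝 0) ∧ Tendsto p atTop (𝓝 0) := by
  set s : ℂ := if 0 ≤ 1 - 4*μ then ((Real.sqrt (1-4*μ) : ℝ) : ℂ)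
    else Complex.I * (Real.sqrt (4*μ-1) : ℝ) with hs_def
  have hs2 : s ^ 2 = 1 - 4*(μ:ℂ) := by
    have : s ^ 2 = ((1 - 4*μ : ℝ) : ℂ) := by
      rw [hs_def]
      split_ifs with h
      · rw [← Complex.ofReal_pow, Real.sq_sqrt h]
      · rw [mul_pow, Complex.I_sq, ← Complex.ofReal_pow, Real.sq_sqrt (by linarith)]
        push_cast
        ring
    rw [this]; push_cast; ring
  obtain ⟨r₁, r₂, hsum, hprod, hdiff, hre1, hre2⟩ :
      ∃ r₁ r₂ : ℂ, r₁ + r₂ = -1 ∧ r₁ * r₂ = (μ : ℂ) ∧ r₁ - r₂ = s ∧ r₁.re < 0 ∧ r₂.re < 0 := by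
    refine ⟨((1/2 : ℝ) : ℂ) * (-1 + s), ((1/2 : ℝ) : ℂ) * (-1 - s), by push_cast; ring, ?_,
      by push_cast; ring, ?_⟩
    · have h4 : ((1/2 : ℝ) : ℂ) * (-1 + s) * (((1/2 : ℝ) : ℂ) * (-1 - s)) = ((1:ℂ) - s^2)/4 := by
        push_cast; ring
      rw [h4, hs2]; ring
    · rw [hs_def]
      split_ifs with h
      · have h1 : Real.sqrt (1 - 4*μ) < 1 := by
          nlinarith [Real.sq_sqrt h, Real.sqrt_nonneg (1 - 4*μ)]
        constructor <;> simp [Complex.add_re, Complex.sub_re] <;>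
          nlinarith [Real.sqrt_nonneg (1 - 4*μ)]
      · constructor <;> simp [Complex.add_re, Complex.sub_re] <;> norm_num
  set Y : ℝ → ℂ := fun t => (y t : ℂ) with hY_def
  set P : ℝ → ℂ := fun t => (p t : ℂ) with hP_def
  have hY : ∀ t, HasDerivAt Y (P t) t := fun t => (hy t).ofReal_comp
  have hP : ∀ t, HasDerivAt P (-(P t) - (μ:ℂ) * Y t) t := by
    intro t
    have := (hp t).ofReal_comp
    push_cast at this
    simpa using this
  set z : ℝ → ℂ := fun t => P t - r₂ * Y t with hz_def
  have hzeq : ∀ t, z t = P t - r₂ * Y t := fun _ => rfl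
  have hz : ∀ t, HasDerivAt z (r₁ * z t) t := by
    intro t
    have := (hP t).sub ((hY t).const_mul r₂)
    refine this.congr_deriv (Eq.symm ?_)
    rw [hzeq t]
    push_cast
    linear_combination (P t) * hsum + (-(Y t)) * hprod
  have hzf : ∀ t, z t = z 0 * Complex.exp (r₁ * t) := ode1 r₁ z hz
  have hztend : Tendsto z atTop (𝓝 0) := by
    have := (tendsto_cexp r₁ hre1).const_mul (z 0)
    simp only [mul_zero] at this
    exact this.congr fun t => (hzf t).symm
  have hYt : Tendsto Y atTop (𝓝 0) := by
    by_cases hs0 : s = 0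
    · -- repeated root
      have hr12 : r₁ = r₂ := by have := hdiff; rw [hs0] at this; exact sub_eq_zero.mp this
      set g : ℝ → ℂ := fun t => Complex.exp (-r₂ * t) * Y t - z 0 * t with hg_def
      have hg : ∀ t, HasDerivAt g 0 t := by
        intro t
        have h1 := (exp_deriv (-r₂) t).mul (hY t)
        have h2 := ((hasDerivAt_id t).ofReal_comp.const_mul (z 0))
        have h3 := h1.sub h2
        refine h3.congr_deriv (Eq.symm ?_)
        have hezt : Complex.exp (-r₂ * t) * z t = z 0 := by
          rw [hzf t, hr12, ← mul_assoc, mul_comm (Complex.exp (-r₂ * t)) (z 0), mul_assoc,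
            ← Complex.exp_add]
          have h4 : -r₂ * (t:ℂ) + r₂ * t = 0 := by ring
          rw [h4, Complex.exp_zero, mul_one]
        push_cast
        linear_combination -hezt + Complex.exp (-r₂ * t) * (hzeq t)
      have hgc := const_of_deriv_zero g hg
      have hYf : ∀ t, Y t = (Y 0 + z 0 * t) * Complex.exp (r₂ * t) := by
        intro t
        have h0 : g 0 = Y 0 := by rw [hg_def]; simp
        have h' : Complex.exp (-r₂ * (t:ℝ)) * Y t - z 0 * (t:ℝ) = Y 0 := (hgc t).trans h0
        apply inv_exp_eq r₂ (Y t) (Y 0 + z 0 * (t:ℝ)) t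
        linear_combination h'
      have t1 := (tendsto_cexp r₂ hre2).const_mul (Y 0)
      have t2 := (tendsto_mul_cexp r₂ hre2).const_mul (z 0)
      simp only [mul_zero] at t1 t2
      have := t1.add t2
      simp only [mul_zero, add_zero, zero_add] at this
      apply this.congr
      intro t
      rw [hYf t]
      ring
    · -- distinct roots
      set g : ℝ → ℂ := fun t => Complex.exp (-r₂ * t) * Y t - (z 0 / s) * Complex.exp (s * t)
        with hg_def
      have hss : z 0 / s * s = z 0 := div_mul_cancel₀ _ hs0
      have hg : ∀ t, HasDerivAt g 0 t := by
        intro t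
        have h1 := (exp_deriv (-r₂) t).mul (hY t)
        have h2 := (exp_deriv s t).const_mul (z 0 / s)
        have h3 := h1.sub h2
        refine h3.congr_deriv (Eq.symm ?_)
        have hezt : Complex.exp (-r₂ * t) * z t = z 0 * Complex.exp (s * t) := by
          rw [hzf t, ← mul_assoc, mul_comm (Complex.exp (-r₂ * t)) (z 0), mul_assoc,
            ← Complex.exp_add]
          congr 2
          linear_combination (t:ℂ) * hdiff
        push_cast
        linear_combination -hezt + Complex.exp (-r₂ * t) * (hzeq t)
          + Complex.exp (s * t) * hss
      have hgc := const_of_deriv_zero g hg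
      have hYf : ∀ t, Y t = (Y 0 - z 0 / s) * Complex.exp (r₂ * t)
          + (z 0 / s) * Complex.exp (r₁ * t) := by
        intro t
        have h0 : g 0 = Y 0 - z 0 / s := by rw [hg_def]; simp
        have h' : Complex.exp (-r₂ * (t:ℝ)) * Y t - (z 0 / s) * Complex.exp (s * (t:ℝ))
            = Y 0 - z 0 / s := (hgc t).trans h0
        have h6 := inv_exp_eq r₂ (Y t) (Y 0 - z 0 / s + (z 0 / s) * Complex.exp (s * (t:ℝ))) t
          (by linear_combination h')
        rw [h6]
        have h7 : Complex.exp (s * t) * Complex.exp (r₂ * t) = Complex.exp (r₁ * t) := by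
          rw [← Complex.exp_add]
          congr 1
          linear_combination (-(t:ℂ)) * hdiff
        linear_combination (z 0 / s) * h7
      have t1 := (tendsto_cexp r₂ hre2).const_mul (Y 0 - z 0 / s)
      have t2 := (tendsto_cexp r₁ hre1).const_mul (z 0 / s)
      simp only [mul_zero] at t1 t2
      have := t1.add t2
      simp only [mul_zero, add_zero, zero_add] at this
      apply this.congr
      intro t
      rw [hYf t]
  have hPt : Tendsto P atTop (𝓝 0) := by
    have := hztend.add (hYt.const_mul r₂)
    simp only [mul_zero, add_zero, zero_add] at this
    apply this.congr
    intro t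
    rw [hzeq t]
    ring
  constructor
  · have := (Complex.continuous_re.tendsto 0).comp hYt
    simpa [Function.comp_def, hY_def] using this
  · have := (Complex.continuous_re.tendsto 0).comp hPt
    simpa [Function.comp_def, hP_def] using this

end ConsensusAux

/-- Under the consensus protocol `u = −v − L x`, velocities converge to zero
and positions reach consensus. -/
theorem consensus_convergence
    {n : ℕ} (L : Matrix (Fin n) (Fin n) ℝ)
    (hLpsd : L.PosSemidef)
    (hker : ∀ p : Fin n → ℝ, L.mulVec p = 0 ↔ ∃ a : ℝ, p = fun _ => a)
    (x v : ℝ → Fin n → ℝ)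
    (hx : ∀ t, HasDerivAt x (v t) t)
    (hv : ∀ t, HasDerivAt v (-(L.mulVec (x t)) - v t) t) :
    (∀ i, Tendsto (fun t => v t i) atTop (𝓝 0)) ∧
    (∀ i j, Tendsto (fun t => x t i - x t j) atTop (𝓝 0)) := by
  classical
  have hH := hLpsd.isHermitian
  set b := hH.eigenvectorBasis with hb_def
  set μ := hH.eigenvalues with hμ_def
  have hμ0 : ∀ k, 0 ≤ μ k := hLpsd.eigenvalues_nonneg
  set w : Fin n → Fin n → ℝ := fun k => ⇑(b k) with hw_def
  have hLw : ∀ k, L.mulVec (w k) = μ k • w k := fun k => hH.mulVec_eigenvectorBasis k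
  have hxi : ∀ (i : Fin n) t, HasDerivAt (fun t => x t i) (v t i) t := fun i t =>
    ((ContinuousLinearMap.proj i :
      (Fin n → ℝ) →L[ℝ] ℝ).hasFDerivAt.comp_hasDerivAt t (hx t))
  have hvi : ∀ (i : Fin n) t, HasDerivAt (fun t => v t i)
      (-(L.mulVec (x t)) i - v t i) t := fun i t => by
    have := ((ContinuousLinearMap.proj i :
      (Fin n → ℝ) →L[ℝ] ℝ).hasFDerivAt.comp_hasDerivAt t (hv t))
    simpa [Function.comp_def] using this
  set y : Fin n → ℝ → ℝ := fun k t => ∑ i, w k i * x t i with hy_def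
  set q : Fin n → ℝ → ℝ := fun k t => ∑ i, w k i * v t i with hq_def
  have hyd : ∀ k t, HasDerivAt (y k) (q k t) t := fun k t =>
    HasDerivAt.fun_sum fun i _ => (hxi i t).const_mul (w k i)
  have hsymm : Lᵀ = L := by
    rw [← Matrix.conjTranspose_eq_transpose_of_trivial, hH.eq]
  have hdot : ∀ k t, ∑ i, w k i * (L.mulVec (x t)) i = μ k * y k t := by
    intro k t
    have h1 : w k ⬝ᵥ L.mulVec (x t) = L.mulVec (w k) ⬝ᵥ x t := by
      rw [Matrix.dotProduct_mulVec]
      congr 1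
      rw [← Matrix.vecMul_transpose, hsymm]
    have h2 : L.mulVec (w k) ⬝ᵥ x t = μ k * (w k ⬝ᵥ x t) := by
      rw [hLw k, smul_dotProduct]
      simp
    simpa [dotProduct] using h1.trans h2
  have hqd : ∀ k t, HasDerivAt (q k) (-q k t - μ k * y k t) t := by
    intro k t
    have h := HasDerivAt.fun_sum (u := Finset.univ)
      (A := fun i t => w k i * v t i)
      (A' := fun i => w k i * (-(L.mulVec (x t)) i - v t i)) (x := t)
      (fun i _ => (hvi i t).const_mul (w k i))
    have heq : ∑ i, w k i * (-(L.mulVec (x t)) i - v t i) = -q k t - μ k * y k t := by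
      calc ∑ i, w k i * (-(L.mulVec (x t)) i - v t i)
          = ∑ i, (-(w k i * (L.mulVec (x t)) i) - w k i * v t i) :=
            Finset.sum_congr rfl fun i _ => by ring
        _ = -(∑ i, w k i * (L.mulVec (x t)) i) - ∑ i, w k i * v t i := by
            rw [Finset.sum_sub_distrib, Finset.sum_neg_distrib]
        _ = -q k t - μ k * y k t := by
            have hqv : q k t = ∑ i, w k i * v t i := rfl
            rw [hdot k t, hqv]; ring
    rw [heq] at h
    exact h
  -- limits of the modes
  have hqlim : ∀ k, Tendsto (q k) atTop (𝓝 0) := by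
    intro k
    rcases lt_or_eq_of_le (hμ0 k) with hk | hk
    · exact (ode2 (μ k) hk (y k) (q k) (hyd k) (hqd k)).2
    · apply ode0
      intro t
      have := hqd k t
      rw [← hk] at this
      simpa using this
  have hylim : ∀ k, 0 < μ k → Tendsto (y k) atTop (𝓝 0) := fun k hk =>
    (ode2 (μ k) hk (y k) (q k) (hyd k) (hqd k)).1
  have hwconst : ∀ k, μ k = 0 → ∀ i j, w k i = w k j := by
    intro k hk i j
    have h0 : L.mulVec (w k) = 0 := by rw [hLw k, hk, zero_smul]
    obtain ⟨a, ha⟩ := (hker (w k)).mp h0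
    rw [ha]
  -- expansion in the eigenbasis (completeness of eigenvectors)
  have hUU : ∀ i j : Fin n, ∑ k, w k i * w k j = if i = j then (1:ℝ) else 0 := by
    intro i j
    have hmem := (Unitary.mem_iff.mp hH.eigenvectorUnitary.2).2
    have := congrFun (congrFun hmem i) j
    rw [Matrix.mul_apply, Matrix.one_apply] at this
    rw [← this]
    refine Finset.sum_congr rfl fun k _ => ?_
    simp [hw_def, hb_def, Matrix.star_apply]
  have hexp : ∀ (u : Fin n → ℝ) (j : Fin n), u j = ∑ k, (∑ i, w k i * u i) * w k j := by
    intro u j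
    have h1 : ∑ k, (∑ i, w k i * u i) * w k j = ∑ i, (∑ k, w k i * w k j) * u i := by
      simp only [Finset.sum_mul]
      rw [Finset.sum_comm]
      exact Finset.sum_congr rfl fun i _ => Finset.sum_congr rfl fun k _ => by ring
    rw [h1]
    simp only [hUU]
    simp
  constructor
  · intro i
    have hrw : ∀ t, v t i = ∑ k, q k t * w k i := fun t => hexp (v t) i
    have : Tendsto (fun t => ∑ k, q k t * w k i) atTop (𝓝 0) := by
      have := tendsto_finset_sum (Finset.univ : Finset (Fin n))
        (f := fun k (t : ℝ) => q k t * w k i) (fun k _ => by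
          simpa using (hqlim k).mul_const (w k i))
      simpa using this
    exact this.congr fun t => (hrw t).symm
  · intro i j
    have hrw : ∀ t, x t i - x t j = ∑ k, y k t * (w k i - w k j) := by
      intro t
      rw [hexp (x t) i, hexp (x t) j, ← Finset.sum_sub_distrib]
      refine Finset.sum_congr rfl fun k _ => ?_
      ring
    have : Tendsto (fun t => ∑ k, y k t * (w k i - w k j)) atTop (𝓝 0) := by
      have := tendsto_finset_sum (Finset.univ : Finset (Fin n))
        (f := fun k (t : ℝ) => y k t * (w k i - w k j)) (fun k _ => by
          rcases lt_or_eq_of_le (hμ0 k) with hk | hk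
          · simpa using (hylim k hk).mul_const (w k i - w k j)
          · have : w k i - w k j = 0 := by rw [hwconst k hk.symm i j]; ring
            simp [this])
      simpa using this
    exact this.congr fun t => (hrw t).symm
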